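/- Let X be a set with two topologies O₁ and O₂, and suppose there exists a subset E ⊆ X such that (a) E is closed for both O₁ and O₂, and (b) O₁ and O₂ induce the same subspace topologies on E and on X \ E. Then (X, O₁) is T0 if and only if (X, O₂) is T0. -/
import Mathlib

lemma insep_induced {X Y : Type*} (t : TopologicalSpace Y) (f : X → Y) (x y : X) :
    @Inseparable Y t (f x) (f y) ↔ @Inseparable X (t.induced f) x y := by
  letI := t; letI := t.induced f
  exact Topology.IsInducing.inseparable_iff ⟨rfl⟩

lemma aux_insep {X : Type*} (O₁ O₂ : TopologicalSpace X) (E : Set X)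
    (hc₁ : @IsClosed X O₁ E)
    (hE : O₁.induced ((↑) : E → X) = O₂.induced ((↑) : E → X))
    (hEc : O₁.induced ((↑) : (Eᶜ : Set X) → X) = O₂.induced ((↑) : (Eᶜ : Set X) → X))
    (x y : X) (h : @Inseparable X O₁ x y) : @Inseparable X O₂ x y := by
  by_cases hx : x ∈ E
  · by_cases hy : y ∈ E
    · have h1 := (insep_induced O₁ ((↑) : E → X) ⟨x, hx⟩ ⟨y, hy⟩).mp h
      rw [hE] at h1
      exact (insep_induced O₂ ((↑) : E → X) ⟨x, hx⟩ ⟨y, hy⟩).mpr h1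
    · exact absurd ((@inseparable_iff_forall_isClosed X O₁ x y).mp h E hc₁) (by simp [hx, hy])
  · by_cases hy : y ∈ E
    · exact absurd ((@inseparable_iff_forall_isClosed X O₁ x y).mp h E hc₁) (by simp [hx, hy])
    · have h1 := (insep_induced O₁ ((↑) : (Eᶜ : Set X) → X) ⟨x, hx⟩ ⟨y, hy⟩).mp h
      rw [hEc] at h1
      exact (insep_induced O₂ ((↑) : (Eᶜ : Set X) → X) ⟨x, hx⟩ ⟨y, hy⟩).mpr h1

/-- If two topologies on a set `X` have a common closed subset `E` and induce
the same subspace topologies on `E` and on its complement, then one of them is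
T0 iff the other is. -/
theorem stmt1 {X : Type*} (O₁ O₂ : TopologicalSpace X) (E : Set X)
    (hc₁ : @IsClosed X O₁ E) (hc₂ : @IsClosed X O₂ E)
    (hE : O₁.induced ((↑) : E → X) = O₂.induced ((↑) : E → X))
    (hEc : O₁.induced ((↑) : (Eᶜ : Set X) → X) = O₂.induced ((↑) : (Eᶜ : Set X) → X)) :
    @T0Space X O₁ ↔ @T0Space X O₂ := by
  rw [@t0Space_iff_inseparable X O₁, @t0Space_iff_inseparable X O₂]
  constructor
  · intro H x y h; exact H x y (aux_insep O₂ O₁ E hc₂ hE.symm hEc.symm x y h)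
  · intro H x y h; exact H x y (aux_insep O₁ O₂ E hc₁ hE hEc x y h)
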